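/- arXiv:1408.4500 — 4 statements merged into one kernel-verified Lean document; each statement's English description precedes it below -/
import Mathlib

section
/- Let x ∈ ℝⁿ satisfy l ≤ x ≤ u componentwise, let d ∈ ℝⁿ, and let 0 < β₁ ≤ β₂. Then ‖P(x − β₁·d) − x‖₂ ≤ ‖P(x − β₂·d) − x‖₂ and ‖P(x − β₂·d) − x‖₂ ≤ (β₂/β₁)·‖P(x − β₁·d) − x‖₂; that is, along the projected gradient path β ↦ P(x − β·d), the norm ‖P(x − β·d) − x‖₂ is nondecreasing in β while the ratio ‖P(x − β·d) − x‖₂ / β is nonincreasing in β. -/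
/-- Componentwise projection onto the box `[l, u]`. -/
noncomputable def boxProj {n : ℕ} (l u z : EuclideanSpace ℝ (Fin n)) :
    EuclideanSpace ℝ (Fin n) :=
  WithLp.toLp 2 (fun i => max (l i) (min (u i) (z i)))

lemma clamp_pair (a b t r : ℝ) (ha : a ≤ 0) (hb : 0 ≤ b) (hr : 1 ≤ r) :
    |max a (min b t)| ≤ |max a (min b (r * t))| ∧
    |max a (min b (r * t))| ≤ r * |max a (min b t)| := by
  have hr0 : (0:ℝ) ≤ r := le_trans zero_le_one hr
  rcases le_total 0 t with ht | ht
  · -- t ≥ 0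
    have hrt : t ≤ r * t := by nlinarith
    have h1 : max a (min b t) = min b t := max_eq_right (le_min hb ht |>.trans' ha)
    have h2 : max a (min b (r * t)) = min b (r * t) :=
      max_eq_right (le_min hb (ht.trans hrt) |>.trans' ha)
    have hnn1 : 0 ≤ min b t := le_min hb ht
    have hnn2 : 0 ≤ min b (r * t) := le_min hb (ht.trans hrt)
    rw [h1, h2, abs_of_nonneg hnn1, abs_of_nonneg hnn2]
    constructor
    · exact min_le_min le_rfl hrt
    · have : min b (r * t) ≤ min (r * b) (r * t) :=
        min_le_min (by nlinarith) le_rfl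
      calc min b (r * t) ≤ min (r * b) (r * t) := this
        _ = r * min b t := by rw [mul_min_of_nonneg _ _ hr0]
  · -- t ≤ 0
    have hrt : r * t ≤ t := by nlinarith
    have h1 : max a (min b t) = max a t := by rw [min_eq_right (le_trans ht hb)]
    have h2 : max a (min b (r * t)) = max a (r * t) := by
      rw [min_eq_right (le_trans hrt (le_trans ht hb))]
    have hnp1 : max a t ≤ 0 := max_le ha ht
    have hnp2 : max a (r * t) ≤ 0 := max_le ha (hrt.trans ht)
    rw [h1, h2, abs_of_nonpos hnp1, abs_of_nonpos hnp2]
    constructor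
    · simp only [neg_le_neg_iff]
      exact max_le_max le_rfl hrt
    · have : max (r * a) (r * t) ≤ max a (r * t) :=
        max_le_max (by nlinarith) le_rfl
      have h3 : r * max a t = max (r * a) (r * t) := mul_max_of_nonneg _ _ hr0
      nlinarith [le_max_left (r*a) (r*t), le_max_right (r*a) (r*t)]

lemma norm_le_of_abs_le {n : ℕ} (v w : EuclideanSpace ℝ (Fin n))
    (h : ∀ i, |v i| ≤ |w i|) : ‖v‖ ≤ ‖w‖ := by
  rw [EuclideanSpace.norm_eq, EuclideanSpace.norm_eq]
  apply Real.sqrt_le_sqrt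
  apply Finset.sum_le_sum
  intro i _
  have := h i
  simp only [Real.norm_eq_abs]
  nlinarith [abs_nonneg (v i)]

/-- Monotonicity properties of the projected gradient path: for `0 < β₁ ≤ β₂`,
`‖P(x − β₁ d) − x‖ ≤ ‖P(x − β₂ d) − x‖` and
`‖P(x − β₂ d) − x‖ ≤ (β₂/β₁) ‖P(x − β₁ d) − x‖`. -/
theorem stmt11 {n : ℕ} (l u x d : EuclideanSpace ℝ (Fin n))
    (hlu : ∀ i, l i ≤ u i) (hlx : ∀ i, l i ≤ x i) (hxu : ∀ i, x i ≤ u i)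
    (β1 β2 : ℝ) (hβ1 : 0 < β1) (hβ12 : β1 ≤ β2) :
    ‖boxProj l u (x - β1 • d) - x‖ ≤ ‖boxProj l u (x - β2 • d) - x‖ ∧
    ‖boxProj l u (x - β2 • d) - x‖ ≤ (β2 / β1) * ‖boxProj l u (x - β1 • d) - x‖ := by
  set r := β2 / β1 with hrdef
  have hr : 1 ≤ r := (one_le_div hβ1).mpr hβ12
  have hr0 : (0:ℝ) ≤ r := le_trans zero_le_one hr
  -- componentwise facts
  have key : ∀ i, |(boxProj l u (x - β1 • d) - x) i| ≤ |(boxProj l u (x - β2 • d) - x) i| ∧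
      |(boxProj l u (x - β2 • d) - x) i| ≤ r * |(boxProj l u (x - β1 • d) - x) i| := by
    intro i
    have e1 : (boxProj l u (x - β1 • d) - x) i
        = max (l i - x i) (min (u i - x i) (-β1 * d i)) := by
      simp only [boxProj, PiLp.sub_apply, PiLp.smul_apply, smul_eq_mul, PiLp.toLp_apply]
      rw [← max_sub_sub_right, ← min_sub_sub_right]
      ring_nf
    have e2 : (boxProj l u (x - β2 • d) - x) i
        = max (l i - x i) (min (u i - x i) (r * (-β1 * d i))) := by
      simp only [boxProj, PiLp.sub_apply, PiLp.smul_apply, smul_eq_mul, PiLp.toLp_apply]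
      rw [← max_sub_sub_right, ← min_sub_sub_right]
      have : r * (-β1 * d i) = -β2 * d i := by
        rw [hrdef, ← mul_assoc, mul_neg, div_mul_cancel₀ β2 hβ1.ne']
      rw [this]
      ring_nf
    rw [e1, e2]
    exact clamp_pair (l i - x i) (u i - x i) (-β1 * d i) r
      (by linarith [hlx i]) (by linarith [hxu i]) hr
  constructor
  · exact norm_le_of_abs_le _ _ fun i => (key i).1
  · have h2 : ‖boxProj l u (x - β2 • d) - x‖ ≤ ‖r • (boxProj l u (x - β1 • d) - x)‖ := by
      apply norm_le_of_abs_le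
      intro i
      have : (r • (boxProj l u (x - β1 • d) - x)) i = r * (boxProj l u (x - β1 • d) - x) i := rfl
      rw [this, abs_mul, abs_of_nonneg hr0]
      exact (key i).2
    calc ‖boxProj l u (x - β2 • d) - x‖ ≤ ‖r • (boxProj l u (x - β1 • d) - x)‖ := h2
      _ = r * ‖boxProj l u (x - β1 • d) - x‖ := by
        rw [norm_smul, Real.norm_eq_abs, abs_of_nonneg hr0]
end

section
/- Let {x_k} ⊂ ℝⁿ with l ≤ x_k ≤ u componentwise for all k, let {a_k}, {b_k} ⊂ ℝⁿ, and let μ > 0 be fixed. If P(x_k − μ·a_k − b_k) − x_k → 0 and b_k → 0, then P(x_k − a_k) − x_k → 0. -/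
open Filter

lemma clamp_abs_eq (l u x a t : ℝ) (hl : l ≤ x) (hu : x ≤ u) (ht : 0 ≤ t) :
    |max l (min u (x - t * a)) - x| = min (if 0 ≤ a then x - l else u - x) (t * |a|) := by
  rcases le_or_gt 0 a with ha | ha
  · rw [if_pos ha, abs_of_nonneg ha]
    have h1 : min u (x - t * a) = x - t * a := min_eq_right (by nlinarith)
    rw [h1]
    rcases le_total l (x - t * a) with h2 | h2
    · rw [max_eq_right h2, show x - t*a - x = -(t*a) by ring, abs_neg,
        abs_of_nonneg (mul_nonneg ht ha), min_eq_right (by linarith)]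
    · rw [max_eq_left h2, abs_of_nonpos (by linarith), min_eq_left (by linarith)]
      ring
  · rw [if_neg (not_le.mpr ha), abs_of_neg ha]
    have hta : 0 ≤ t * (-a) := mul_nonneg ht (by linarith)
    rcases le_total u (x - t * a) with h2 | h2
    · have h1 : min u (x - t * a) = u := min_eq_left h2
      rw [h1, max_eq_right (by linarith), abs_of_nonneg (by linarith),
        min_eq_left (by nlinarith)]
    · have h1 : min u (x - t * a) = x - t * a := min_eq_right h2
      rw [h1, max_eq_right (by nlinarith), show x - t*a - x = t * (-a) by ring,
        abs_of_nonneg hta, min_eq_right (by nlinarith)]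

lemma clamp_lip (l u z z' : ℝ) : |max l (min u z) - max l (min u z')| ≤ |z - z'| := by
  calc |max l (min u z) - max l (min u z')| ≤ max |l - l| |min u z - min u z'| :=
        abs_max_sub_max_le_max _ _ _ _
    _ ≤ max |l - l| (max |u - u| |z - z'|) :=
        max_le_max le_rfl (abs_min_sub_min_le_max _ _ _ _)
    _ ≤ |z - z'| := by simp

lemma key_step (l u x a μ : ℝ) (hl : l ≤ x) (hu : x ≤ u) (hμ : 0 < μ) :
    |max l (min u (x - a)) - x| ≤ max 1 μ⁻¹ * |max l (min u (x - μ * a)) - x| := by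
  have e1 := clamp_abs_eq l u x a 1 hl hu zero_le_one
  have e2 := clamp_abs_eq l u x a μ hl hu hμ.le
  rw [show x - 1 * a = x - a by ring] at e1
  rw [e1, e2]
  set c : ℝ := if 0 ≤ a then x - l else u - x with hc
  have hc0 : 0 ≤ c := by rw [hc]; split <;> linarith
  have habs : (0:ℝ) ≤ |a| := abs_nonneg a
  rw [one_mul]
  rcases le_total 1 μ with h | h
  · rw [max_eq_left (inv_le_one_of_one_le₀ h), one_mul]
    exact min_le_min le_rfl (by nlinarith)
  · rw [max_eq_right (one_le_inv₀ hμ |>.mpr h), le_inv_mul_iff₀ hμ]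
    apply le_min <;> rcases le_total c |a| with h3 | h3 <;>
      simp [min_eq_left, min_eq_right, h3] <;> nlinarith

/-- If `l ≤ x_k ≤ u`, `μ > 0` is fixed, `P(x_k − μ a_k − b_k) − x_k → 0` and `b_k → 0`,
then `P(x_k − a_k) − x_k → 0`. -/
theorem stmt12 {n : ℕ} (l u : EuclideanSpace ℝ (Fin n)) (hlu : ∀ i, l i ≤ u i)
    (x a b : ℕ → EuclideanSpace ℝ (Fin n))
    (hbox : ∀ k, ∀ i, l i ≤ x k i ∧ x k i ≤ u i)
    (μ : ℝ) (hμ : 0 < μ)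
    (h1 : Tendsto (fun k => boxProj l u (x k - μ • a k - b k) - x k) atTop (nhds 0))
    (h2 : Tendsto b atTop (nhds 0)) :
    Tendsto (fun k => boxProj l u (x k - a k) - x k) atTop (nhds 0) := by
  set M : ℝ := max 1 μ⁻¹ with hM
  have key : ∀ f : ℕ → EuclideanSpace ℝ (Fin n),
      Tendsto f atTop (nhds 0) ↔ ∀ i, Tendsto (fun k => f k i) atTop (nhds 0) := by
    intro f
    constructor
    · intro h
      exact tendsto_pi_nhds.mp ((PiLp.continuous_ofLp (p := 2) (β := fun _ : Fin n => ℝ)).tendsto 0 |>.comp h)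
    · intro h
      have := (PiLp.continuous_toLp (p := 2) (β := fun _ : Fin n => ℝ)).tendsto 0 |>.comp (tendsto_pi_nhds.mpr h)
      simpa [Function.comp_def] using this
  rw [key]
  intro i
  have hi1 : Tendsto (fun k => boxProj l u (x k - μ • a k - b k) i - x k i) atTop (nhds 0) := by
    simpa using (key _).mp h1 i
  have hi2 : Tendsto (fun k => b k i) atTop (nhds 0) := by
    simpa using (key _).mp h2 i
  have hbound : ∀ k, |boxProj l u (x k - a k) i - x k i| ≤
      M * (|boxProj l u (x k - μ • a k - b k) i - x k i| + |b k i|) := by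
    intro k
    have hl := (hbox k i).1
    have hu := (hbox k i).2
    have step1 : |boxProj l u (x k - a k) i - x k i| ≤
        M * |max (l i) (min (u i) (x k i - μ * a k i)) - x k i| := by
      have := key_step (l i) (u i) (x k i) (a k i) μ hl hu hμ
      exact this
    have step2 : |max (l i) (min (u i) (x k i - μ * a k i)) - x k i| ≤
        |boxProj l u (x k - μ • a k - b k) i - x k i| + |b k i| := by
      have lip := clamp_lip (l i) (u i) (x k i - μ * a k i) (x k i - μ * a k i - b k i)
      have hB : boxProj l u (x k - μ • a k - b k) i =
          max (l i) (min (u i) (x k i - μ * a k i - b k i)) := rfl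
      rw [hB]
      calc |max (l i) (min (u i) (x k i - μ * a k i)) - x k i|
          ≤ |max (l i) (min (u i) (x k i - μ * a k i)) -
              max (l i) (min (u i) (x k i - μ * a k i - b k i))| +
            |max (l i) (min (u i) (x k i - μ * a k i - b k i)) - x k i| := by
            exact abs_sub_le _ _ _
        _ ≤ |x k i - μ * a k i - (x k i - μ * a k i - b k i)| +
            |max (l i) (min (u i) (x k i - μ * a k i - b k i)) - x k i| :=
            add_le_add_left lip _
        _ = |max (l i) (min (u i) (x k i - μ * a k i - b k i)) - x k i| + |b k i| := by
            rw [show x k i - μ * a k i - (x k i - μ * a k i - b k i) = b k i by ring]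
            ring
    have hM0 : (0:ℝ) ≤ M := le_trans zero_le_one (le_max_left _ _)
    calc |boxProj l u (x k - a k) i - x k i|
        ≤ M * |max (l i) (min (u i) (x k i - μ * a k i)) - x k i| := step1
      _ ≤ M * (|boxProj l u (x k - μ • a k - b k) i - x k i| + |b k i|) :=
          mul_le_mul_of_nonneg_left step2 hM0
  have hlim : Tendsto (fun k => M * (|boxProj l u (x k - μ • a k - b k) i - x k i| + |b k i|))
      atTop (nhds 0) := by
    have := ((hi1.abs.add hi2.abs).const_mul M)
    simpa using this
  have main : Tendsto (fun k => boxProj l u (x k - a k) i - x k i) atTop (nhds 0) :=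
    squeeze_zero_norm (fun k => by simpa [Real.norm_eq_abs] using hbound k) hlim
  simpa using main
end

section
/- Let f : ℝⁿ → ℝ and c : ℝⁿ → ℝ^m be continuously differentiable, let K ⊂ ℝⁿ be compact, and let μ > 0 be fixed. Let {x_j} ⊂ K with l ≤ x_j ≤ u for all j, and let {y_j}, {ŷ_j} ⊂ ℝ^m satisfy ‖F_L(x_j, ŷ_j)‖₂ ≤ ‖F_L(x_j, y_j)‖₂ for all j. Suppose {t_j} and {T_j} are positive sequences with t_j → 0 and T_j → 0 such that for every j, ‖c(x_j)‖₂ ≤ t_j and min{ ‖F_L(x_j, ŷ_j)‖₂, ‖F_AL(x_j, y_j, μ)‖₂ } ≤ T_j. Then c(x_j) → 0 and F_L(x_j, ŷ_j) → 0; consequently, every limit point (x*, y*) of {(x_j, ŷ_j)} satisfies c(x*) = 0 and F_L(x*, y*) = 0, i.e., it is a first-order stationary point for minimizing f(x) subject to c(x) = 0 and l ≤ x ≤ u. -/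
open Filter

/-- Lagrangian stationarity measure `F_L(x, y) = P(x − (∇f(x) − J(x)ᵀy)) − x`. -/
noncomputable def FL {n m : ℕ} (l u : EuclideanSpace ℝ (Fin n))
    (f : EuclideanSpace ℝ (Fin n) → ℝ)
    (c : EuclideanSpace ℝ (Fin n) → EuclideanSpace ℝ (Fin m))
    (x : EuclideanSpace ℝ (Fin n)) (y : EuclideanSpace ℝ (Fin m)) :
    EuclideanSpace ℝ (Fin n) :=
  boxProj l u (x - (gradient f x - ContinuousLinearMap.adjoint (fderiv ℝ c x) y)) - x

/-- Augmented Lagrangian stationarity measure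
`F_AL(x, y, μ) = P(x − μ(∇f(x) − J(x)ᵀy) − J(x)ᵀc(x)) − x`. -/
noncomputable def FAL {n m : ℕ} (l u : EuclideanSpace ℝ (Fin n))
    (f : EuclideanSpace ℝ (Fin n) → ℝ)
    (c : EuclideanSpace ℝ (Fin n) → EuclideanSpace ℝ (Fin m))
    (x : EuclideanSpace ℝ (Fin n)) (y : EuclideanSpace ℝ (Fin m)) (μ : ℝ) :
    EuclideanSpace ℝ (Fin n) :=
  boxProj l u (x - μ • (gradient f x - ContinuousLinearMap.adjoint (fderiv ℝ c x) y)
    - ContinuousLinearMap.adjoint (fderiv ℝ c x) (c x)) - x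

/- ### Auxiliary lemmas -/

lemma clamp_scale_nonneg (a b x s μ : ℝ) (hax : a ≤ x) (hxb : x ≤ b) (hμ : 0 < μ) (hs : 0 ≤ s) :
    |max a (min b (x + s)) - x| ≤ max 1 μ⁻¹ * |max a (min b (x + μ * s)) - x| := by
  have h1 : max a (min b (x + s)) = min b (x + s) := by
    rw [max_eq_right]; exact le_min (hax.trans hxb) (by linarith)
  have h2 : max a (min b (x + μ * s)) = min b (x + μ * s) := by
    rw [max_eq_right]; exact le_min (hax.trans hxb) (by nlinarith)
  rw [h1, h2]
  have e1 : |min b (x + s) - x| = min (b - x) s := by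
    rw [abs_of_nonneg (by simp [le_min_iff]; constructor <;> linarith)]
    rcases le_total b (x + s) with h | h <;> simp [min_eq_left, min_eq_right, h] <;> linarith
  have e2 : |min b (x + μ * s) - x| = min (b - x) (μ * s) := by
    rw [abs_of_nonneg (by simp [le_min_iff]; constructor <;> [linarith; nlinarith])]
    rcases le_total b (x + μ * s) with h | h <;> simp [min_eq_left, min_eq_right, h] <;> linarith
  rw [e1, e2]
  rcases le_total 1 μ with h | h
  · calc min (b - x) s ≤ min (b - x) (μ * s) := min_le_min le_rfl (by nlinarith)
      _ ≤ max 1 μ⁻¹ * min (b - x) (μ * s) := by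
          nlinarith [le_max_left 1 μ⁻¹,
            le_min (by linarith : (0:ℝ) ≤ b - x) (by nlinarith : (0:ℝ) ≤ μ*s),
            min_le_left (b-x) (μ*s)]
  · have hinv : μ * μ⁻¹ = 1 := mul_inv_cancel₀ hμ.ne'
    have hμ1 : 1 ≤ μ⁻¹ := by nlinarith
    rw [max_eq_right hμ1]
    have : μ⁻¹ * min (b - x) (μ * s) = min (μ⁻¹ * (b - x)) s := by
      rw [mul_min_of_nonneg _ _ (by positivity)]
      congr 1
      field_simp
    rw [this]
    exact min_le_min (by nlinarith) le_rfl

lemma clamp_nonexp (a b z z' : ℝ) : |max a (min b z) - max a (min b z')| ≤ |z - z'| := by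
  calc |max a (min b z) - max a (min b z')|
      = |max (min b z) a - max (min b z') a| := by rw [max_comm a, max_comm a]
    _ ≤ |min b z - min b z'| := abs_max_sub_max_le_abs _ _ _
    _ ≤ max |b - b| |z - z'| := abs_min_sub_min_le_max _ _ _ _
    _ = |z - z'| := by simp

lemma neg_clamp (a b z : ℝ) (hab : a ≤ b) :
    max (-b) (min (-a) (-z)) = -(max a (min b z)) := by
  rcases le_total z a with h | h <;> rcases le_total z b with h' | h' <;>
    simp [min_eq_left, min_eq_right, max_eq_left, max_eq_right, *] <;>
  · first
    | (rw [min_eq_left (by linarith), max_eq_right (by linarith)]; ring)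
    | (rw [max_eq_left (by linarith), min_eq_right (by linarith)]; ring)
    | linarith

lemma clamp_scale (a b x s μ : ℝ) (hax : a ≤ x) (hxb : x ≤ b) (hμ : 0 < μ) :
    |max a (min b (x + s)) - x| ≤ max 1 μ⁻¹ * |max a (min b (x + μ * s)) - x| := by
  rcases le_total 0 s with hs | hs
  · exact clamp_scale_nonneg a b x s μ hax hxb hμ hs
  · have hab : a ≤ b := hax.trans hxb
    have H := clamp_scale_nonneg (-b) (-a) (-x) (-s) μ (by linarith) (by linarith) hμ
      (by linarith)
    have e1 : -x + -s = -(x + s) := by ring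
    have e2 : -x + μ * -s = -(x + μ * s) := by ring
    rw [e1, e2, neg_clamp a b _ hab, neg_clamp a b _ hab] at H
    calc |max a (min b (x + s)) - x| = |-(max a (min b (x + s))) - -x| := by
          rw [← abs_neg]; ring_nf
      _ ≤ max 1 μ⁻¹ * |-(max a (min b (x + μ * s))) - -x| := H
      _ = max 1 μ⁻¹ * |max a (min b (x + μ * s)) - x| := by
          rw [show -(max a (min b (x + μ * s))) - -x = -(max a (min b (x + μ * s)) - x) by ring,
            abs_neg]

/-- componentwise absolute value, as a vector of `EuclideanSpace`. -/
noncomputable def eAbs {n : ℕ} (a : EuclideanSpace ℝ (Fin n)) : EuclideanSpace ℝ (Fin n) :=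
  (WithLp.equiv 2 _).symm fun i => |a i|

@[simp] lemma eAbs_apply {n : ℕ} (a : EuclideanSpace ℝ (Fin n)) (i : Fin n) :
    eAbs a i = |a i| := rfl

lemma norm_eAbs {n : ℕ} (a : EuclideanSpace ℝ (Fin n)) : ‖eAbs a‖ = ‖a‖ := by
  rw [EuclideanSpace.norm_eq, EuclideanSpace.norm_eq]
  congr 1
  apply Finset.sum_congr rfl
  intro i _
  simp [Real.norm_eq_abs, abs_abs]

lemma euclid_norm_le {n : ℕ} (a b : EuclideanSpace ℝ (Fin n)) (h : ∀ i, |a i| ≤ |b i|) :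
    ‖a‖ ≤ ‖b‖ := by
  rw [EuclideanSpace.norm_eq, EuclideanSpace.norm_eq]
  apply Real.sqrt_le_sqrt
  apply Finset.sum_le_sum
  intro i _
  simp only [Real.norm_eq_abs]
  exact pow_le_pow_left₀ (abs_nonneg _) (h i) 2

/-- Key inequality: `‖F_L(x,y)‖ ≤ max(1, μ⁻¹) (‖F_AL(x,y,μ)‖ + ‖J(x)ᵀ c(x)‖)`. -/
lemma FL_le_FAL {n m : ℕ} (l u : EuclideanSpace ℝ (Fin n))
    (f : EuclideanSpace ℝ (Fin n) → ℝ)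
    (c : EuclideanSpace ℝ (Fin n) → EuclideanSpace ℝ (Fin m))
    (x : EuclideanSpace ℝ (Fin n)) (y : EuclideanSpace ℝ (Fin m)) (μ : ℝ) (hμ : 0 < μ)
    (hbox : ∀ i, l i ≤ x i ∧ x i ≤ u i) :
    ‖FL l u f c x y‖ ≤ max 1 μ⁻¹ * (‖FAL l u f c x y μ‖ +
      ‖ContinuousLinearMap.adjoint (fderiv ℝ c x) (c x)‖) := by
  set C := max 1 μ⁻¹ with hCdef
  have hC0 : (0:ℝ) ≤ C := le_trans zero_le_one (le_max_left _ _)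
  set v := gradient f x - ContinuousLinearMap.adjoint (fderiv ℝ c x) y with hv
  set w := ContinuousLinearMap.adjoint (fderiv ℝ c x) (c x) with hw
  have hcomp : ∀ i, |FL l u f c x y i| ≤ |(C • (eAbs (FAL l u f c x y μ) + eAbs w)) i| := by
    intro i
    have hFLi : FL l u f c x y i = max (l i) (min (u i) (x i + -(v i))) - x i := by
      simp [FL, boxProj, ← hv, sub_eq_add_neg]
    have hFALi : FAL l u f c x y μ i =
        max (l i) (min (u i) ((x i + μ * -(v i)) + -(w i))) - x i := by
      simp [FAL, boxProj, ← hv, ← hw, sub_eq_add_neg, mul_comm]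
    have step1 := clamp_scale (l i) (u i) (x i) (-(v i)) μ (hbox i).1 (hbox i).2 hμ
    have step2 : |max (l i) (min (u i) (x i + μ * -(v i))) - x i| ≤
        |max (l i) (min (u i) ((x i + μ * -(v i)) + -(w i))) - x i| + |w i| := by
      have tri : |max (l i) (min (u i) (x i + μ * -(v i))) - x i| ≤
          |max (l i) (min (u i) (x i + μ * -(v i))) -
            max (l i) (min (u i) ((x i + μ * -(v i)) + -(w i)))| +
          |max (l i) (min (u i) ((x i + μ * -(v i)) + -(w i))) - x i| :=
        abs_sub_le _ _ _
      have ne := clamp_nonexp (l i) (u i) (x i + μ * -(v i)) ((x i + μ * -(v i)) + -(w i))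
      have : |x i + μ * -(v i) - (x i + μ * -(v i) + -(w i))| = |w i| := by
        rw [show x i + μ * -(v i) - (x i + μ * -(v i) + -(w i)) = w i by ring]
      linarith [tri, ne.trans_eq this]
    have hRHS : (C • (eAbs (FAL l u f c x y μ) + eAbs w)) i =
        C * (|FAL l u f c x y μ i| + |w i|) := by
      simp [PiLp.smul_apply, PiLp.add_apply, smul_eq_mul, mul_add]
    rw [hFLi, hRHS, abs_of_nonneg (mul_nonneg hC0 (by positivity))]
    calc |max (l i) (min (u i) (x i + -(v i))) - x i|
        ≤ C * |max (l i) (min (u i) (x i + μ * -(v i))) - x i| := step1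
      _ ≤ C * (|max (l i) (min (u i) ((x i + μ * -(v i)) + -(w i))) - x i| + |w i|) :=
          mul_le_mul_of_nonneg_left step2 hC0
      _ = C * (|FAL l u f c x y μ i| + |w i|) := by rw [hFALi]
  calc ‖FL l u f c x y‖ ≤ ‖C • (eAbs (FAL l u f c x y μ) + eAbs w)‖ :=
        euclid_norm_le _ _ hcomp
    _ = C * ‖eAbs (FAL l u f c x y μ) + eAbs w‖ := by
        rw [norm_smul, Real.norm_eq_abs, abs_of_nonneg hC0]
    _ ≤ C * (‖FAL l u f c x y μ‖ + ‖w‖) := by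
        refine mul_le_mul_of_nonneg_left ?_ hC0
        calc ‖eAbs (FAL l u f c x y μ) + eAbs w‖
            ≤ ‖eAbs (FAL l u f c x y μ)‖ + ‖eAbs w‖ := norm_add_le _ _
          _ = ‖FAL l u f c x y μ‖ + ‖w‖ := by rw [norm_eAbs, norm_eAbs]

/-- If `‖F_L(x_j, ŷ_j)‖ ≤ ‖F_L(x_j, y_j)‖`, `‖c(x_j)‖ ≤ t_j → 0` and
`min{‖F_L(x_j, ŷ_j)‖, ‖F_AL(x_j, y_j, μ)‖} ≤ T_j → 0`, then `c(x_j) → 0` and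
`F_L(x_j, ŷ_j) → 0`; hence every limit point `(x*, y*)` of `{(x_j, ŷ_j)}` satisfies
`c(x*) = 0` and `F_L(x*, y*) = 0`. -/
theorem stmt13 {n m : ℕ} (l u : EuclideanSpace ℝ (Fin n)) (hlu : ∀ i, l i ≤ u i)
    (f : EuclideanSpace ℝ (Fin n) → ℝ)
    (c : EuclideanSpace ℝ (Fin n) → EuclideanSpace ℝ (Fin m))
    (hf : ContDiff ℝ 1 f) (hc : ContDiff ℝ 1 c)
    (K : Set (EuclideanSpace ℝ (Fin n))) (hK : IsCompact K)
    (μ : ℝ) (hμ : 0 < μ)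
    (x : ℕ → EuclideanSpace ℝ (Fin n)) (hxK : ∀ j, x j ∈ K)
    (hbox : ∀ j, ∀ i, l i ≤ x j i ∧ x j i ≤ u i)
    (y yh : ℕ → EuclideanSpace ℝ (Fin m))
    (hyh : ∀ j, ‖FL l u f c (x j) (yh j)‖ ≤ ‖FL l u f c (x j) (y j)‖)
    (t T : ℕ → ℝ) (ht_pos : ∀ j, 0 < t j) (hT_pos : ∀ j, 0 < T j)
    (ht_lim : Tendsto t atTop (nhds 0)) (hT_lim : Tendsto T atTop (nhds 0))
    (hc_target : ∀ j, ‖c (x j)‖ ≤ t j)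
    (hstat_target : ∀ j,
      min ‖FL l u f c (x j) (yh j)‖ ‖FAL l u f c (x j) (y j) μ‖ ≤ T j) :
    Tendsto (fun j => c (x j)) atTop (nhds 0) ∧
    Tendsto (fun j => FL l u f c (x j) (yh j)) atTop (nhds 0) ∧
    ∀ p : EuclideanSpace ℝ (Fin n) × EuclideanSpace ℝ (Fin m),
      MapClusterPt p atTop (fun j => (x j, yh j)) →
        c p.1 = 0 ∧ FL l u f c p.1 p.2 = 0 := by
  set C := max 1 μ⁻¹ with hCdef
  have hC1 : (1:ℝ) ≤ C := le_max_left _ _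
  have hC0 : (0:ℝ) ≤ C := zero_le_one.trans hC1
  -- bound on the Jacobian over K
  obtain ⟨M, hM⟩ := hK.exists_bound_of_continuousOn (hc.continuous_fderiv one_ne_zero).continuousOn
  have hM0 : 0 ≤ M := (norm_nonneg _).trans (hM (x 0) (hxK 0))
  have hw_bound : ∀ j, ‖ContinuousLinearMap.adjoint (fderiv ℝ c (x j)) (c (x j))‖ ≤ M * t j := by
    intro j
    calc ‖ContinuousLinearMap.adjoint (fderiv ℝ c (x j)) (c (x j))‖
        ≤ ‖ContinuousLinearMap.adjoint (fderiv ℝ c (x j))‖ * ‖c (x j)‖ :=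
          ContinuousLinearMap.le_opNorm _ _
      _ = ‖fderiv ℝ c (x j)‖ * ‖c (x j)‖ := by
          rw [LinearIsometryEquiv.norm_map]
      _ ≤ M * t j := by
          have h1 := hM (x j) (hxK j)
          have h2 := hc_target j
          have := norm_nonneg (c (x j))
          nlinarith
  -- main bound on ‖FL(x_j, ŷ_j)‖
  have hbig : ∀ j, ‖FL l u f c (x j) (yh j)‖ ≤ C * (T j + M * t j) := by
    intro j
    have hMt : 0 ≤ M * t j := mul_nonneg hM0 (ht_pos j).le
    rcases min_le_iff.mp (hstat_target j) with h | h
    · calc ‖FL l u f c (x j) (yh j)‖ ≤ T j := h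
        _ ≤ C * (T j + M * t j) := by nlinarith [(hT_pos j).le]
    · calc ‖FL l u f c (x j) (yh j)‖ ≤ ‖FL l u f c (x j) (y j)‖ := hyh j
        _ ≤ C * (‖FAL l u f c (x j) (y j) μ‖ +
            ‖ContinuousLinearMap.adjoint (fderiv ℝ c (x j)) (c (x j))‖) :=
          FL_le_FAL l u f c (x j) (y j) μ hμ (hbox j)
        _ ≤ C * (T j + M * t j) := by
            refine mul_le_mul_of_nonneg_left (add_le_add h (hw_bound j)) hC0
  have hlim_bound : Tendsto (fun j => C * (T j + M * t j)) atTop (nhds 0) := by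
    have : Tendsto (fun j => C * (T j + M * t j)) atTop (nhds (C * (0 + M * 0))) :=
      (hT_lim.add (ht_lim.const_mul M)).const_mul C
    simpa using this
  have hFL_lim : Tendsto (fun j => FL l u f c (x j) (yh j)) atTop (nhds 0) := by
    rw [tendsto_zero_iff_norm_tendsto_zero]
    exact squeeze_zero (fun j => norm_nonneg _) hbig hlim_bound
  have hc_lim : Tendsto (fun j => c (x j)) atTop (nhds 0) := by
    rw [tendsto_zero_iff_norm_tendsto_zero]
    exact squeeze_zero (fun j => norm_nonneg _) hc_target ht_lim
  refine ⟨hc_lim, hFL_lim, ?_⟩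
  intro p hp
  -- continuity facts
  have hgrad : Continuous (gradient f) := by
    have : Continuous fun z => (InnerProductSpace.toDual ℝ
        (EuclideanSpace ℝ (Fin n))).symm (fderiv ℝ f z) :=
      (LinearIsometryEquiv.continuous _).comp (hf.continuous_fderiv one_ne_zero)
    exact this
  have hJ : Continuous fun q : EuclideanSpace ℝ (Fin n) × EuclideanSpace ℝ (Fin m) =>
      ContinuousLinearMap.adjoint (fderiv ℝ c q.1) q.2 := by
    refine Continuous.clm_apply ?_ continuous_snd
    exact (LinearIsometryEquiv.continuous _).comp
      ((hc.continuous_fderiv one_ne_zero).comp continuous_fst)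
  have hboxProjCont : Continuous (boxProj l u) := by
    unfold boxProj
    exact (PiLp.continuous_toLp 2 _).comp (continuous_pi fun i =>
      continuous_const.max (continuous_const.min ((continuous_apply i).comp (PiLp.continuous_ofLp 2 _))))
  have hFLcont : Continuous fun q : EuclideanSpace ℝ (Fin n) × EuclideanSpace ℝ (Fin m) =>
      FL l u f c q.1 q.2 := by
    unfold FL
    exact (hboxProjCont.comp
      (continuous_fst.sub ((hgrad.comp continuous_fst).sub hJ))).sub continuous_fst
  have key : ∀ {X : Type} [TopologicalSpace X] [T2Space X]
      (g : (EuclideanSpace ℝ (Fin n) × EuclideanSpace ℝ (Fin m)) → X) (b : X),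
      Continuous g → Tendsto (fun j => g (x j, yh j)) atTop (nhds b) → g p = b := by
    intro X _ _ g b hg hgb
    have h1 : MapClusterPt (g p) atTop (g ∘ fun j => (x j, yh j)) :=
      hp.continuousAt_comp hg.continuousAt
    have h2 : Tendsto (g ∘ fun j => (x j, yh j)) atTop (nhds b) := by
      have he : (g ∘ fun j => (x j, yh j)) = fun j => g (x j, yh j) := by funext j; rfl
      rw [he]; exact hgb
    have h3 : (nhds (g p) ⊓ map (g ∘ fun j => (x j, yh j)) atTop).NeBot := h1
    exact eq_of_nhds_neBot (h3.mono (inf_le_inf_left _ h2))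
  constructor
  · exact key (fun q => c q.1) 0 (hc.continuous.comp continuous_fst) hc_lim
  · exact key (fun q => FL l u f c q.1 q.2) 0 hFLcont hFL_lim
end

section
/- Let f : ℝⁿ → ℝ and c : ℝⁿ → ℝ^m be continuously differentiable with g(x) = ∇f(x) and J(x) = ∇c(x). Suppose x ∈ ℝⁿ satisfies l ≤ x ≤ u componentwise, μ > 0, c(x) = 0, and F_AL(x, y, μ) = 0. Then F_L(x, y) = 0; hence F_OPT(x, y) = 0, i.e., (x, y) is a first-order primal-dual stationary point for minimizing f(x) subject to c(x) = 0 and l ≤ x ≤ u. -/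
lemma scalar_step (l u x v μ : ℝ) (hμ : 0 < μ) (hl : l ≤ x) (hu : x ≤ u)
    (h : max l (min u (x - μ * v)) = x) : max l (min u (x - v)) = x := by
  have ht : min u (x - μ * v) ≤ x := le_trans (le_max_right l _) h.le
  rcases lt_trichotomy v 0 with hv | hv | hv
  · have hx : x < x - μ * v := by nlinarith
    have hux : u ≤ x := by
      rcases min_cases u (x - μ * v) with ⟨he, _⟩ | ⟨he, h2⟩
      · linarith [he ▸ ht]
      · linarith [he ▸ ht]
    have hue : u = x := le_antisymm hux hu
    have hme : min u (x - v) = u := min_eq_left (by nlinarith)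
    rw [hme, hue, max_eq_right hl]
  · subst hv; rw [mul_zero] at h; exact h
  · have hx : x - μ * v < x := by nlinarith
    have hmin : min u (x - μ * v) = x - μ * v := min_eq_right (by linarith)
    rw [hmin] at h
    have hle : l = x := by
      rcases max_cases l (x - μ * v) with ⟨he, _⟩ | ⟨he, h2⟩
      · linarith [he ▸ h]
      · linarith [h ▸ he]
    have hml : max l (min u (x - v)) = l := by
      have h1 : x - v < l := by linarith
      have h2 : x - v ≤ u := by linarith
      rw [min_eq_right h2, max_eq_left (le_of_lt h1)]
    rw [hml, hle]

/-- If `l ≤ x ≤ u`, `μ > 0`, `c(x) = 0` and `F_AL(x, y, μ) = 0`, then `F_L(x, y) = 0`;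
hence `F_OPT(x, y) = (F_L(x, y), −c(x)) = 0`: the pair `(x, y)` is a first-order
primal-dual stationary point. -/
theorem stmt15 {n m : ℕ} (l u : EuclideanSpace ℝ (Fin n)) (hlu : ∀ i, l i ≤ u i)
    (f : EuclideanSpace ℝ (Fin n) → ℝ)
    (c : EuclideanSpace ℝ (Fin n) → EuclideanSpace ℝ (Fin m))
    (hf : ContDiff ℝ 1 f) (hc : ContDiff ℝ 1 c)
    (x : EuclideanSpace ℝ (Fin n)) (y : EuclideanSpace ℝ (Fin m)) (μ : ℝ) (hμ : 0 < μ)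
    (hbox : ∀ i, l i ≤ x i ∧ x i ≤ u i)
    (hcx : c x = 0) (hFAL : FAL l u f c x y μ = 0) :
    FL l u f c x y = 0 ∧ c x = 0 := by
  refine ⟨?_, hcx⟩
  set v := gradient f x - ContinuousLinearMap.adjoint (fderiv ℝ c x) y with hv
  have hadj : ContinuousLinearMap.adjoint (fderiv ℝ c x) (c x) = 0 := by
    rw [hcx]; simp
  unfold FAL at hFAL
  rw [hadj, sub_zero] at hFAL
  unfold FL
  rw [sub_eq_zero] at hFAL ⊢
  ext i
  have hi : boxProj l u (x - μ • v) i = x i := congrArg (fun z : EuclideanSpace ℝ (Fin n) => z i) hFAL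
  have hbi := hbox i
  have hbp : boxProj l u (x - μ • v) i = max (l i) (min (u i) (x i - μ * v i)) := rfl
  rw [hbp] at hi
  show max (l i) (min (u i) ((x - v) i)) = x i
  have hxv : (x - v) i = x i - v i := rfl
  rw [hxv]
  exact scalar_step (l i) (u i) (x i) (v i) μ hμ hbi.1 hbi.2 hi
end
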